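/- In U(gl_{n+1}), for every ℓ ≥ 0 the element E^{(ℓ)} := Σ_{1 ≤ i_1,...,i_{ℓ+1} ≤ n} E_{i_{ℓ+1},0} E_{i_ℓ,i_{ℓ+1}} E_{i_{ℓ-1},i_ℓ} ··· E_{i_1,i_2} E_{0,i_1} is invariant under the adjoint action of gl_n, i.e. [E_{ab}, E^{(ℓ)}] = 0 for all 1 ≤ a,b ≤ n. -/

import Mathlib

attribute [local instance 100] LieRing.ofAssociativeRing

/-- The universal enveloping algebra of `gl_{m} = Matrix (Fin m) (Fin m) ℂ`. -/
noncomputable abbrev UEAgl (m : ℕ) :=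
  UniversalEnvelopingAlgebra ℂ (Matrix (Fin m) (Fin m) ℂ)

/-- The image `E_{ij}` in the universal enveloping algebra of the matrix unit. -/
noncomputable def EE (m : ℕ) (i j : Fin m) : UEAgl m :=
  UniversalEnvelopingAlgebra.ι ℂ (Matrix.single i j (1 : ℂ))

/-- `E_j^{(ℓ)}` for `1 ≤ j ≤ n`, defined recursively:
`E_j^{(0)} = E_{0j}` and `E_j^{(ℓ)} = Σ_{i=1}^n E_{ij} E_i^{(ℓ-1)}`. -/
noncomputable def Ejl (n : ℕ) : ℕ → Fin n → UEAgl (n + 1)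
  | 0, j => EE (n + 1) 0 j.succ
  | ℓ + 1, j => ∑ i : Fin n, EE (n + 1) i.succ j.succ * Ejl n ℓ i

/-- `E^{(ℓ)} = Σ_{j=1}^n E_{j0} E_j^{(ℓ)}
 = Σ_{1 ≤ i_1,…,i_{ℓ+1} ≤ n} E_{i_{ℓ+1},0} E_{i_ℓ,i_{ℓ+1}} ⋯ E_{i_1,i_2} E_{0,i_1}`. -/
noncomputable def Ebig (n : ℕ) (ℓ : ℕ) : UEAgl (n + 1) :=
  ∑ j : Fin n, EE (n + 1) j.succ 0 * Ejl n ℓ j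


lemma EE_comm (m : ℕ) (i j k l : Fin m) :
    EE m i j * EE m k l - EE m k l * EE m i j =
      (if j = k then EE m i l else 0) - (if l = i then EE m k j else 0) := by
  have h : EE m i j * EE m k l - EE m k l * EE m i j =
      UniversalEnvelopingAlgebra.ι ℂ
        ⁅Matrix.single i j (1 : ℂ), Matrix.single k l (1 : ℂ)⁆ := by
    rw [LieHom.map_lie, Ring.lie_def]; rfl
  rw [h, Ring.lie_def, map_sub]
  congr 1
  · by_cases hj : j = k
    · subst hj
      simp [EE, Matrix.single_mul_single_same]
    · simp [EE, hj]
  · by_cases hl : l = i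
    · subst hl
      simp [EE, Matrix.single_mul_single_same]
    · simp [EE, hl]

lemma Ejl_comm (n : ℕ) (a b : Fin n) : ∀ (ℓ : ℕ) (j : Fin n),
    EE (n+1) a.succ b.succ * Ejl n ℓ j - Ejl n ℓ j * EE (n+1) a.succ b.succ =
      (if j = a then -Ejl n ℓ b else 0)
  | 0, j => by
      show EE (n+1) a.succ b.succ * EE (n+1) 0 j.succ
          - EE (n+1) 0 j.succ * EE (n+1) a.succ b.succ = _
      rw [EE_comm]
      simp only [Fin.succ_inj, (Fin.succ_ne_zero b), if_neg (Fin.succ_ne_zero b)]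
      by_cases hja : j = a <;> simp [hja, Ejl]
  | ℓ+1, j => by
      show EE (n+1) a.succ b.succ * (∑ i : Fin n, EE (n+1) i.succ j.succ * Ejl n ℓ i)
          - (∑ i : Fin n, EE (n+1) i.succ j.succ * Ejl n ℓ i) * EE (n+1) a.succ b.succ = _
      rw [Finset.mul_sum, Finset.sum_mul, ← Finset.sum_sub_distrib]
      have expand : ∀ i : Fin n,
          EE (n+1) a.succ b.succ * (EE (n+1) i.succ j.succ * Ejl n ℓ i)
            - EE (n+1) i.succ j.succ * Ejl n ℓ i * EE (n+1) a.succ b.succ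
          = (EE (n+1) a.succ b.succ * EE (n+1) i.succ j.succ
              - EE (n+1) i.succ j.succ * EE (n+1) a.succ b.succ) * Ejl n ℓ i
            + EE (n+1) i.succ j.succ *
              (EE (n+1) a.succ b.succ * Ejl n ℓ i - Ejl n ℓ i * EE (n+1) a.succ b.succ) := by
        intro i; noncomm_ring
      simp only [expand, EE_comm, Ejl_comm n a b ℓ, Fin.succ_inj]
      rw [Finset.sum_add_distrib]
      simp only [sub_mul, ite_mul, zero_mul, mul_ite, mul_zero, mul_neg,
        Finset.sum_sub_distrib, Finset.sum_ite_eq, Finset.sum_ite_eq',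
        Finset.mem_univ, if_true]
      by_cases hja : j = a <;> simp [hja, Ejl, Finset.mul_sum, eq_comm] <;> abel

/-- In `U(gl_{n+1})`, each `E^{(ℓ)}` is invariant under the adjoint action of the
embedded `gl_n` (indices `1,…,n`): `[E_{ab}, E^{(ℓ)}] = 0` for all `1 ≤ a, b ≤ n`. -/
theorem Ebig_gl_invariant (n ℓ : ℕ) (a b : Fin n) :
    EE (n + 1) a.succ b.succ * Ebig n ℓ - Ebig n ℓ * EE (n + 1) a.succ b.succ = 0 := by
  rw [Ebig, Finset.mul_sum, Finset.sum_mul, ← Finset.sum_sub_distrib]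
  have expand : ∀ j : Fin n,
      EE (n+1) a.succ b.succ * (EE (n+1) j.succ 0 * Ejl n ℓ j)
        - EE (n+1) j.succ 0 * Ejl n ℓ j * EE (n+1) a.succ b.succ
      = (EE (n+1) a.succ b.succ * EE (n+1) j.succ 0
          - EE (n+1) j.succ 0 * EE (n+1) a.succ b.succ) * Ejl n ℓ j
        + EE (n+1) j.succ 0 *
          (EE (n+1) a.succ b.succ * Ejl n ℓ j - Ejl n ℓ j * EE (n+1) a.succ b.succ) := by
    intro j; noncomm_ring
  simp only [expand, EE_comm, Ejl_comm, Fin.succ_inj,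
    if_neg (Ne.symm (Fin.succ_ne_zero a)), sub_zero]
  rw [Finset.sum_add_distrib]
  simp [ite_mul, mul_ite, Finset.sum_ite_eq, Finset.sum_ite_eq', eq_comm]
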